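/- Let Φ : ℝⁿ × ℝᵐ → ℝ be differentiable, such that for every y, x ↦ Φ(x,y) is μ_x-strongly convex (μ_x > 0), for every x, y ↦ Φ(x,y) is μ_y-strongly concave (μ_y > 0), and ∇_x Φ is Lipschitz in y with constant L_{xy}: ‖∇_x Φ(x,y) − ∇_x Φ(x,ȳ)‖ ≤ L_{xy}‖y − ȳ‖ for all x, y, ȳ. Define x*(y) = argmin_x Φ(x,y). Then x* is Lipschitz continuous with constant √(2(L_{xy}/μ_x)² + 1): for all y, ȳ, ‖x*(y) − x*(ȳ)‖ ≤ √(2 L_{xy}²/μ_x² + 1) · ‖y − ȳ‖. -/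

import Mathlib

open InnerProductSpace

/-- First-order condition for strong convexity: `f z ≥ f x + ⟪g, z-x⟫ + μ/2 ‖z-x‖²`. -/
lemma strongConvex_first_order {n : ℕ} {μ : ℝ}
    {f : EuclideanSpace ℝ (Fin n) → ℝ} {x g : EuclideanSpace ℝ (Fin n)}
    (hsc : StrongConvexOn Set.univ μ f) (hg : HasGradientAt f g x)
    (z : EuclideanSpace ℝ (Fin n)) :
    f x + inner ℝ g (z - x) + μ / 2 * ‖z - x‖ ^ 2 ≤ f z := by
  set v := z - x with hv
  have hc : ∀ t : ℝ, x + t • v = (1 - t) • x + t • z := by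
    intro t
    simp only [hv, smul_sub, sub_smul, one_smul]
    abel
  -- derivative of t ↦ f (x + t • v) at 0 is ⟪g, v⟫
  have hcurve : HasDerivAt (fun t : ℝ => x + t • v) v 0 := by
    simpa using ((hasDerivAt_id (0:ℝ)).smul_const v).const_add x
  have hφ : HasDerivAt (fun t : ℝ => f (x + t • v)) (inner ℝ g v) 0 := by
    have hfd : HasFDerivAt f ((InnerProductSpace.toDual ℝ _) g) ((fun t : ℝ => x + t • v) 0) := by
      simpa using hg.hasFDerivAt
    have := hfd.comp_hasDerivAt 0 hcurve
    exact this
  -- slope inequality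
  have hslope : Filter.Tendsto (fun t : ℝ => (f (x + t • v) - f x) / t)
      (nhdsWithin 0 (Set.Ioi 0)) (nhds (inner ℝ g v)) := by
    have h1 := hasDerivAt_iff_tendsto_slope.1 hφ
    have h2 : Filter.Tendsto (slope (fun t : ℝ => f (x + t • v)) 0)
        (nhdsWithin 0 (Set.Ioi 0)) (nhds (inner ℝ g v)) :=
      h1.mono_left (nhdsWithin_mono _ (fun t ht => by
        simp only [Set.mem_compl_iff, Set.mem_singleton_iff]
        exact ne_of_gt ht))
    refine h2.congr' ?_
    filter_upwards [self_mem_nhdsWithin] with t ht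
    simp [slope, div_eq_inv_mul]
  have hRHS : Filter.Tendsto (fun t : ℝ => f z - f x - (1 - t) * (μ / 2 * ‖x - z‖ ^ 2))
      (nhdsWithin 0 (Set.Ioi 0)) (nhds (f z - f x - μ / 2 * ‖x - z‖ ^ 2)) := by
    have : Filter.Tendsto (fun t : ℝ => f z - f x - (1 - t) * (μ / 2 * ‖x - z‖ ^ 2))
        (nhds 0) (nhds (f z - f x - (1 - 0) * (μ / 2 * ‖x - z‖ ^ 2))) :=
      (Continuous.tendsto (by continuity) 0)
    simpa using this.mono_left nhdsWithin_le_nhds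
  have key : inner ℝ g v ≤ f z - f x - μ / 2 * ‖x - z‖ ^ 2 := by
    refine le_of_tendsto_of_tendsto hslope hRHS ?_
    filter_upwards [Ioo_mem_nhdsGT_of_mem (show (0:ℝ) ∈ Set.Ico (0:ℝ) 1 by
      constructor <;> norm_num)] with t ht
    obtain ⟨ht0, ht1⟩ := ht
    have := hsc.2 (Set.mem_univ x) (Set.mem_univ z)
      (show (0:ℝ) ≤ 1 - t by linarith) (show (0:ℝ) ≤ t from le_of_lt ht0)
      (show (1 - t) + t = 1 by ring)
    rw [← hc t] at this
    simp only [smul_eq_mul] at this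
    rw [div_le_iff₀ ht0]
    nlinarith
  have hn : ‖x - z‖ = ‖z - x‖ := norm_sub_rev _ _
  rw [hn] at key
  linarith

theorem argmin_lipschitz {n m : ℕ}
    (μx μy Lxy : ℝ) (hμx : 0 < μx) (hμy : 0 < μy)
    (Φ : EuclideanSpace ℝ (Fin n) → EuclideanSpace ℝ (Fin m) → ℝ)
    (Gx : EuclideanSpace ℝ (Fin n) → EuclideanSpace ℝ (Fin m) → EuclideanSpace ℝ (Fin n))
    (hGx : ∀ x y, HasGradientAt (fun x' => Φ x' y) (Gx x y) x)
    (hsc : ∀ y, StrongConvexOn Set.univ μx (fun x => Φ x y))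
    (hscc : ∀ x, StrongConvexOn Set.univ μy (fun y => -Φ x y))
    (hlip : ∀ x y ybar, ‖Gx x y - Gx x ybar‖ ≤ Lxy * ‖y - ybar‖)
    (xs : EuclideanSpace ℝ (Fin m) → EuclideanSpace ℝ (Fin n))
    (hxs : ∀ y x, Φ (xs y) y ≤ Φ x y) :
    ∀ y ybar, ‖xs y - xs ybar‖ ≤ Real.sqrt (2 * Lxy ^ 2 / μx ^ 2 + 1) * ‖y - ybar‖ := by
  -- gradient vanishes at the minimizer
  have hgrad0 : ∀ y, Gx (xs y) y = 0 := by
    intro y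
    have hmin : IsLocalMin (fun x' => Φ x' y) (xs y) :=
      Filter.Eventually.of_forall (fun x => hxs y x)
    have h0 := hmin.hasFDerivAt_eq_zero (hGx (xs y) y).hasFDerivAt
    have heq : (InnerProductSpace.toDual ℝ (EuclideanSpace ℝ (Fin n))) (Gx (xs y) y)
        = (InnerProductSpace.toDual ℝ (EuclideanSpace ℝ (Fin n))) 0 := by
      rw [h0, map_zero]
    exact (InnerProductSpace.toDual ℝ (EuclideanSpace ℝ (Fin n))).injective heq
  intro y ybar
  set a := xs y with ha
  set b := xs ybar with hb
  -- strong monotonicity at ybar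
  have h1 := strongConvex_first_order (hsc ybar) (hGx b ybar) a
  have h2 := strongConvex_first_order (hsc ybar) (hGx a ybar) b
  rw [hgrad0 ybar] at h1
  simp only [inner_zero_left] at h1
  have hmono : μx * ‖a - b‖ ^ 2 ≤ inner ℝ (Gx a ybar) (a - b) := by
    have hnab : ‖b - a‖ = ‖a - b‖ := norm_sub_rev _ _
    have hinner : (inner ℝ (Gx a ybar) (b - a) : ℝ) = - inner ℝ (Gx a ybar) (a - b) := by
      rw [← inner_neg_right]; congr 1; abel
    rw [hnab, hinner] at h2
    linarith
  have hbound : μx * ‖a - b‖ ^ 2 ≤ Lxy * ‖y - ybar‖ * ‖a - b‖ := by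
    calc μx * ‖a - b‖ ^ 2 ≤ inner ℝ (Gx a ybar) (a - b) := hmono
      _ = inner ℝ (Gx a ybar - Gx a y) (a - b) := by rw [hgrad0 y]; simp
      _ ≤ ‖Gx a ybar - Gx a y‖ * ‖a - b‖ := real_inner_le_norm _ _
      _ ≤ (Lxy * ‖ybar - y‖) * ‖a - b‖ := by
          apply mul_le_mul_of_nonneg_right (hlip a ybar y) (norm_nonneg _)
      _ = Lxy * ‖y - ybar‖ * ‖a - b‖ := by rw [norm_sub_rev]
  rcases eq_or_lt_of_le (norm_nonneg (a - b)) with hab | hab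
  · rw [← hab]
    positivity
  · have hstep : μx * ‖a - b‖ ≤ Lxy * ‖y - ybar‖ := by
      have := (mul_le_mul_iff_of_pos_right hab).1 (by nlinarith : μx * ‖a - b‖ * ‖a - b‖ ≤ Lxy * ‖y - ybar‖ * ‖a - b‖)
      exact this
    have hdiv : ‖a - b‖ ≤ Lxy / μx * ‖y - ybar‖ := by
      rw [div_mul_eq_mul_div, le_div_iff₀ hμx]
      linarith [hstep]
    have hsqrt : Lxy / μx ≤ Real.sqrt (2 * Lxy ^ 2 / μx ^ 2 + 1) := by
      have h1 : Lxy / μx ≤ |Lxy / μx| := le_abs_self _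
      have h2 : |Lxy / μx| = Real.sqrt ((Lxy / μx) ^ 2) := (Real.sqrt_sq_eq_abs _).symm
      have h3 : (Lxy / μx) ^ 2 ≤ 2 * Lxy ^ 2 / μx ^ 2 + 1 := by
        rw [div_pow]
        have : Lxy ^ 2 / μx ^ 2 ≤ 2 * Lxy ^ 2 / μx ^ 2 := by
          apply div_le_div_of_nonneg_right _ (by positivity)
          · nlinarith [sq_nonneg Lxy]
        linarith
      calc Lxy / μx ≤ |Lxy / μx| := h1
        _ = Real.sqrt ((Lxy / μx) ^ 2) := h2
        _ ≤ _ := Real.sqrt_le_sqrt h3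
    calc ‖a - b‖ ≤ Lxy / μx * ‖y - ybar‖ := hdiv
      _ ≤ Real.sqrt (2 * Lxy ^ 2 / μx ^ 2 + 1) * ‖y - ybar‖ :=
          mul_le_mul_of_nonneg_right hsqrt (norm_nonneg _)
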